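/- Let A be a C*-algebra, let a, b be positive elements of A, and let ε > 0 satisfy ‖a − b‖ < ε. Then for every λ > 0 one has (a − λ − ε)_+ ≼_A (b − λ)_+. -/

import Mathlib

open scoped CStarAlgebra
set_option linter.unusedSectionVars false
set_option maxHeartbeats 1000000

/-- `a` is Cuntz subequivalent to `b` in `A`: for every `ε > 0` there is `y ∈ A` with
`‖y * b * y* - a‖ < ε`. -/
def CuntzLE {A : Type*} [NonUnitalNormedRing A] [StarRing A] (a b : A) : Prop :=
  ∀ ε > (0 : ℝ), ∃ y : A, ‖y * b * star y - a‖ < ε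

/-- `(a - ε)₊`, the image of `a` under the continuous functional calculus applied to
`t ↦ max (t - ε) 0`. -/
noncomputable def cutdown {A : Type*} [NonUnitalCStarAlgebra A] (a : A) (ε : ℝ) : A :=
  cfcₙ (fun t : ℝ => max (t - ε) 0) a

section Aux

variable {A : Type*} [NonUnitalCStarAlgebra A] [PartialOrder A] [StarOrderedRing A]

lemma cuntzLE_trans {a b c : A} (h1 : CuntzLE a b) (h2 : CuntzLE b c) : CuntzLE a c := by
  intro η hη
  obtain ⟨z, hz⟩ := h1 (η/2) (by positivity)
  obtain ⟨y, hy⟩ := h2 (η/(2 * (‖z‖^2 + 1))) (by positivity)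
  refine ⟨z * y, ?_⟩
  have key : z * y * c * star (z * y) - a
      = z * (y * c * star y - b) * star z + (z * b * star z - a) := by
    simp only [star_mul]
    noncomm_ring
  rw [key]
  calc ‖z * (y * c * star y - b) * star z + (z * b * star z - a)‖
      ≤ ‖z * (y * c * star y - b) * star z‖ + ‖z * b * star z - a‖ := norm_add_le _ _
    _ ≤ ‖z‖ * ‖y * c * star y - b‖ * ‖z‖ + ‖z * b * star z - a‖ := by
        gcongr
        · calc ‖z * (y * c * star y - b) * star z‖
              ≤ ‖z * (y * c * star y - b)‖ * ‖star z‖ := norm_mul_le _ _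
            _ ≤ ‖z‖ * ‖y * c * star y - b‖ * ‖z‖ := by
                rw [norm_star]; gcongr; exact norm_mul_le _ _
    _ < η/2 + η/2 := by
        refine add_lt_add_of_le_of_lt ?_ hz
        have h1 : ‖z‖ * ‖y * c * star y - b‖ * ‖z‖ ≤ (‖z‖^2 + 1) * (η/(2 * (‖z‖^2 + 1))) := by
          have := norm_nonneg (y * c * star y - b)
          have := norm_nonneg z
          nlinarith [sq_nonneg (‖z‖)]
        have h2 : (‖z‖^2 + 1) * (η/(2 * (‖z‖^2 + 1))) = η/2 := by
          field_simp
        linarith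
    _ = η := by ring

lemma cuntzLE_of_smul_le {x z : A} {δ : ℝ} (hδ : 0 < δ) (h : CuntzLE (δ • x) z) :
    CuntzLE x z := by
  intro η hη
  obtain ⟨y, hy⟩ := h (δ * η) (by positivity)
  refine ⟨(Real.sqrt δ)⁻¹ • y, ?_⟩
  have hss : (Real.sqrt δ)⁻¹ * (Real.sqrt δ)⁻¹ = δ⁻¹ := by
    rw [← mul_inv, Real.mul_self_sqrt hδ.le]
  have key : ((Real.sqrt δ)⁻¹ • y) * z * star ((Real.sqrt δ)⁻¹ • y)
      = δ⁻¹ • (y * z * star y) := by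
    rw [star_smul, star_trivial]
    rw [smul_mul_assoc, smul_mul_assoc, mul_smul_comm, smul_smul, hss]
  rw [key]
  have : δ⁻¹ • (y * z * star y) - x = δ⁻¹ • (y * z * star y - δ • x) := by
    rw [smul_sub, smul_smul, inv_mul_cancel₀ hδ.ne', one_smul]
  rw [this, norm_smul]
  have : ‖(δ⁻¹ : ℝ)‖ = δ⁻¹ := by
    rw [Real.norm_eq_abs, abs_of_pos (by positivity)]
  rw [this]
  calc δ⁻¹ * ‖y * z * star y - δ • x‖ < δ⁻¹ * (δ * η) := by
        gcongr
    _ = η := by field_simp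

lemma cuntzLE_of_le {x y : A} (hx : 0 ≤ x) (hxy : x ≤ y) : CuntzLE x y := by
  have hy : 0 ≤ y := hx.trans hxy
  have hxsa : IsSelfAdjoint x := .of_nonneg hx
  have hysa : IsSelfAdjoint y := .of_nonneg hy
  intro η hη
  set t : ℝ := η / 3 with ht
  have ht0 : 0 < t := by positivity
  set g : ℝ → ℝ := fun u => Real.sqrt u / (u + t) with hg
  have hg0 : g 0 = 0 := by simp [hg]
  set sx : A := cfcₙ Real.sqrt x with hsxdef
  set q : A := cfcₙ g y with hqdef
  have hsx_sa : IsSelfAdjoint sx := cfcₙ_predicate _ x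
  have hq_sa : IsSelfAdjoint q := cfcₙ_predicate _ y
  refine ⟨sx * q, ?_⟩
  -- unitization
  have hX : (0 : A⁺¹) ≤ (x : A⁺¹) := Unitization.inr_nonneg_iff.mpr hx
  have hY : (0 : A⁺¹) ≤ (y : A⁺¹) := Unitization.inr_nonneg_iff.mpr hy
  have hXY : (x : A⁺¹) ≤ (y : A⁺¹) := (Unitization.inr_le_iff x y hxsa hysa).mpr hxy
  have hXsa : IsSelfAdjoint (x : A⁺¹) := hxsa.inr ℂ
  have hYsa : IsSelfAdjoint (y : A⁺¹) := hysa.inr ℂ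
  have hσY : ∀ u ∈ spectrum ℝ (y : A⁺¹), 0 ≤ u := fun u hu => spectrum_nonneg_of_nonneg hY hu
  have hgc : ContinuousOn g (spectrum ℝ (y : A⁺¹)) := by
    apply ContinuousOn.div
    · exact Real.continuous_sqrt.continuousOn
    · fun_prop
    · exact fun u hu => by have := hσY u hu; positivity
  set ψ : ℝ → ℝ := fun u => g u * u * g u with hψdef
  have hψc : ContinuousOn ψ (spectrum ℝ (y : A⁺¹)) := (hgc.mul continuousOn_id).mul hgc
  have hpt : ∀ u : ℝ, 0 ≤ u → ψ u = u^2/(u+t)^2 := by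
    intro u hu
    have hne : u + t ≠ 0 := by positivity
    have hs : Real.sqrt u * Real.sqrt u = u := Real.mul_self_sqrt hu
    simp only [hψdef, hg]
    field_simp
    linear_combination u * hs
  have hψ01 : ∀ u : ℝ, 0 ≤ u → 0 ≤ ψ u ∧ ψ u ≤ 1 := by
    intro u hu
    rw [hpt u hu]
    constructor
    · positivity
    · rw [div_le_one (by positivity)]
      nlinarith
  set ρ : ℝ → ℝ := fun u => Real.sqrt (1 - ψ u) with hρdef
  have hρc : ContinuousOn ρ (spectrum ℝ (y : A⁺¹)) :=
    Real.continuous_sqrt.comp_continuousOn (continuousOn_const.sub hψc)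
  set S : A⁺¹ := (sx : A⁺¹) with hSdef
  set Q : A⁺¹ := (q : A⁺¹) with hQdef
  set c : A⁺¹ := cfc ρ (y : A⁺¹) with hcdef
  have hS_sa : IsSelfAdjoint S := hsx_sa.inr ℂ
  have hQ_sa : IsSelfAdjoint Q := hq_sa.inr ℂ
  have hc_sa : IsSelfAdjoint c := cfc_predicate _ _
  -- S * S = X
  have hsxsq : sx * sx = x := by
    rw [hsxdef, ← cfcₙ_mul Real.sqrt Real.sqrt x
      (Real.continuous_sqrt.continuousOn) (by simp)
      (Real.continuous_sqrt.continuousOn) (by simp)]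
    rw [cfcₙ_congr (fun u hu =>
      Real.mul_self_sqrt (quasispectrum_nonneg_of_nonneg x hx u hu))]
    exact cfcₙ_id ℝ x
  have hSS : S * S = (x : A⁺¹) := by
    rw [hSdef, ← Unitization.inr_mul, hsxsq]
  -- Q = cfc g Y
  have hQcfc : Q = cfc g (y : A⁺¹) := by
    rw [hQdef, hqdef, Unitization.real_cfcₙ_eq_cfc_inr y g hg0]
  -- Q * Y * Q = cfc ψ Y
  have hQYQ : Q * (y : A⁺¹) * Q = cfc ψ (y : A⁺¹) := by
    rw [hψdef]
    rw [cfc_mul (fun u => g u * u) g (y : A⁺¹) (hgc.mul continuousOn_id) hgc]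
    rw [cfc_mul g (fun u => u) (y : A⁺¹) hgc continuousOn_id]
    rw [cfc_id' ℝ (y : A⁺¹), hQcfc]
  -- c * c = 1 - cfc ψ Y
  have h1ψ : ∀ u ∈ spectrum ℝ (y : A⁺¹), ρ u * ρ u = 1 - ψ u := fun u hu =>
    Real.mul_self_sqrt (by linarith [(hψ01 u (hσY u hu)).2])
  have hcc : c * c = 1 - cfc ψ (y : A⁺¹) := by
    rw [hcdef, ← cfc_mul ρ ρ (y : A⁺¹) hρc hρc, cfc_congr h1ψ,
      cfc_sub (fun _ => (1:ℝ)) ψ (y : A⁺¹) continuousOn_const hψc,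
      cfc_const 1 (y : A⁺¹), map_one]
  -- the difference is star (c*S) * (c*S)
  have hD : (x : A⁺¹) - S * cfc ψ (y : A⁺¹) * S = star (c * S) * (c * S) := by
    have h1 : star (c * S) * (c * S) = S * (c * c) * S := by
      rw [star_mul, hc_sa.star_eq, hS_sa.star_eq]; noncomm_ring
    rw [h1, hcc, mul_sub, sub_mul, mul_one, hSS]
  have hnormD : ‖(x : A⁺¹) - S * cfc ψ (y : A⁺¹) * S‖ = ‖c * (x : A⁺¹) * c‖ := by
    have h1 : c * (x : A⁺¹) * c = (c * S) * star (c * S) := by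
      rw [star_mul, hc_sa.star_eq, hS_sa.star_eq, ← hSS]; noncomm_ring
    rw [hD, h1, CStarRing.norm_star_mul_self, CStarRing.norm_self_mul_star]
  have hcXc_nonneg : 0 ≤ c * (x : A⁺¹) * c := by
    simpa [hc_sa.star_eq] using star_left_conjugate_nonneg hX c
  have hcXcY : c * (x : A⁺¹) * c ≤ c * (y : A⁺¹) * c := by
    simpa [hc_sa.star_eq] using star_left_conjugate_le_conjugate hXY c
  have hcYc : c * (y : A⁺¹) * c = cfc (fun u => ρ u * u * ρ u) (y : A⁺¹) := by
    rw [cfc_mul (fun u => ρ u * u) ρ (y : A⁺¹) (hρc.mul continuousOn_id) hρc]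
    rw [cfc_mul ρ (fun u => u) (y : A⁺¹) hρc continuousOn_id]
    rw [cfc_id' ℝ (y : A⁺¹), hcdef]
  have hnorm_cYc : ‖c * (y : A⁺¹) * c‖ ≤ 2 * t := by
    rw [hcYc]
    refine norm_cfc_le (by positivity) fun u hu => ?_
    have hu0 := hσY u hu
    have h1 : ρ u * u * ρ u = (1 - ψ u) * u := by
      have := h1ψ u hu; nlinarith [this]
    rw [Real.norm_eq_abs, h1, abs_of_nonneg (by
      have := hψ01 u hu0
      nlinarith [this.1, this.2])]
    rw [hpt u hu0]
    have hd : (0:ℝ) < (u + t)^2 := by positivity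
    have h2 : (1 - u^2/(u+t)^2) * u = (u * ((u+t)^2 - u^2))/(u+t)^2 := by
      field_simp
    rw [h2, div_le_iff₀ hd]
    nlinarith [mul_nonneg hu0 (mul_nonneg ht0.le ht0.le),
      mul_nonneg (mul_nonneg ht0.le ht0.le) ht0.le]
  have hDle : ‖(x : A⁺¹) - S * cfc ψ (y : A⁺¹) * S‖ ≤ 2 * t := by
    rw [hnormD]
    exact (CStarAlgebra.norm_le_norm_of_nonneg_of_le hcXc_nonneg hcXcY).trans hnorm_cYc
  -- conclude
  rw [← Unitization.norm_inr (𝕜 := ℂ)]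
  have hpush : ((sx * q * y * star (sx * q) - x : A) : A⁺¹)
      = S * cfc ψ (y : A⁺¹) * S - (x : A⁺¹) := by
    have h0 : star (sx * q) = q * sx := by
      rw [star_mul, hq_sa.star_eq, hsx_sa.star_eq]
    rw [h0]
    simp only [Unitization.inr_sub, Unitization.inr_mul]
    rw [← hSdef, ← hQdef, ← hQYQ]
    noncomm_ring
  rw [hpush, norm_sub_rev]
  calc ‖(x : A⁺¹) - S * cfc ψ (y : A⁺¹) * S‖ ≤ 2 * t := hDle
    _ < η := by rw [ht]; linarith

lemma cuntzLE_conj {f s : A} (hf : 0 ≤ f) (hs : IsSelfAdjoint s) :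
    CuntzLE (s * f * s) f := by
  have hfsa : IsSelfAdjoint f := .of_nonneg hf
  intro η hη
  set t : ℝ := η / (‖s‖^2 + 1) with htdef
  have ht0 : 0 < t := by positivity
  have hσ : ∀ u ∈ quasispectrum ℝ f, 0 ≤ u := fun u hu =>
    quasispectrum_nonneg_of_nonneg f hf u hu
  set g : ℝ → ℝ := fun u => Real.sqrt (max u 0 / (u + t)) with hg
  have hg0 : g 0 = 0 := by simp [hg]
  have hgc : ContinuousOn g (quasispectrum ℝ f) := by
    apply Real.continuous_sqrt.comp_continuousOn
    apply ContinuousOn.div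
    · fun_prop
    · fun_prop
    · exact fun u hu => by have := hσ u hu; positivity
  set q : A := cfcₙ g f with hqdef
  have hq_sa : IsSelfAdjoint q := cfcₙ_predicate _ f
  refine ⟨s * q, ?_⟩
  have h0 : star (s * q) = q * s := by rw [star_mul, hq_sa.star_eq, hs.star_eq]
  rw [h0]
  -- q * f * q = cfcₙ (g·id·g) f
  have hqfq : q * f * q = cfcₙ (fun u => g u * u * g u) f := by
    rw [cfcₙ_mul (fun u => g u * u) g f ((hgc.mul continuousOn_id)) (by simp [hg0]) hgc hg0]
    rw [cfcₙ_mul g (fun u => u) f hgc hg0 continuousOn_id rfl]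
    rw [cfcₙ_id' ℝ f, hqdef]
  have hdiff : f - cfcₙ (fun u => g u * u * g u) f
      = cfcₙ (fun u => u - g u * u * g u) f := by
    rw [cfcₙ_sub (fun u => u) (fun u => g u * u * g u) f continuousOn_id rfl
      ((hgc.mul continuousOn_id).mul hgc) (by simp [hg0]), cfcₙ_id' ℝ f]
  have hnorm : ‖f - cfcₙ (fun u => g u * u * g u) f‖ ≤ t := by
    rw [hdiff]
    refine norm_cfcₙ_le fun u hu => ?_
    have hu0 := hσ u hu
    have hne : u + t ≠ 0 := by positivity
    have hmax : max u 0 = u := max_eq_left hu0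
    have hgg : g u * g u = u / (u + t) := by
      rw [hg]
      rw [Real.mul_self_sqrt (by rw [hmax]; positivity)]
      rw [hmax]
    have hval : u - g u * u * g u = u * t / (u + t) := by
      have h1 : g u * u * g u = (g u * g u) * u := by ring
      rw [h1, hgg]
      field_simp
      ring
    rw [hval, Real.norm_eq_abs, abs_of_nonneg (by positivity), div_le_iff₀ (by positivity)]
    nlinarith [mul_nonneg hu0 ht0.le]
  calc ‖s * q * f * (q * s) - s * f * s‖ = ‖s * (cfcₙ (fun u => g u * u * g u) f - f) * s‖ := by
        rw [← hqfq]; congr 1; noncomm_ring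
    _ ≤ ‖s * (cfcₙ (fun u => g u * u * g u) f - f)‖ * ‖s‖ := norm_mul_le _ _
    _ ≤ ‖s‖ * ‖cfcₙ (fun u => g u * u * g u) f - f‖ * ‖s‖ := by
        gcongr; exact norm_mul_le _ _
    _ ≤ ‖s‖ * t * ‖s‖ := by
        gcongr
        rw [norm_sub_rev]; exact hnorm
    _ < η := by
        have h1 : ‖s‖ * t * ‖s‖ = ‖s‖^2 * t := by ring
        have h2 : ‖s‖^2 * t < (‖s‖^2 + 1) * t :=
          mul_lt_mul_of_pos_right (by linarith) ht0
        have h3 : (‖s‖^2 + 1) * t = η := by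
          rw [htdef]; field_simp
        linarith

end Aux

theorem stmt2 {A : Type*} [NonUnitalCStarAlgebra A] [PartialOrder A] [StarOrderedRing A]
    (a b : A) (ha : 0 ≤ a) (hb : 0 ≤ b) (ε : ℝ) (hε : 0 < ε) (h : ‖a - b‖ < ε) :
    ∀ lam > (0 : ℝ), CuntzLE (cutdown a (lam + ε)) (cutdown b lam) := by
  intro lam hlam
  set r : ℝ := ‖a - b‖ with hrdef
  have hr0 : 0 ≤ r := norm_nonneg _
  set δ : ℝ := ε - r with hδdef
  have hδ : 0 < δ := by rw [hδdef]; linarith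
  have hasa : IsSelfAdjoint a := .of_nonneg ha
  have hbsa : IsSelfAdjoint b := .of_nonneg hb
  set m : ℝ → ℝ := fun u => max (u - (lam + ε)) 0 with hm
  set mf : ℝ → ℝ := fun u => max (u - lam) 0 with hmf
  set ms : ℝ → ℝ := fun u => Real.sqrt (max (u - (lam + ε)) 0) with hms
  have hm0 : m 0 = 0 := by simp [hm]; linarith
  have hmf0 : mf 0 = 0 := by simp [hmf]; linarith
  have hms0 : ms 0 = 0 := by
    simp only [hms]
    rw [zero_sub, max_eq_right (by linarith), Real.sqrt_zero]
  have hmc : Continuous m := by rw [hm]; fun_prop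
  have hmfc : Continuous mf := by rw [hmf]; fun_prop
  have hmsc : Continuous ms := by rw [hms]; fun_prop
  set e : A := cutdown a (lam + ε) with hedef
  set f : A := cutdown b lam with hfdef
  set s : A := cfcₙ ms a with hsdef
  have hs_sa : IsSelfAdjoint s := cfcₙ_predicate _ a
  have he : 0 ≤ e := by
    rw [hedef, cutdown]; exact cfcₙ_nonneg fun u hu => le_max_right _ _
  have hf : 0 ≤ f := by
    rw [hfdef, cutdown]; exact cfcₙ_nonneg fun u hu => le_max_right _ _
  have he_sa : IsSelfAdjoint e := .of_nonneg he
  have hf_sa : IsSelfAdjoint f := .of_nonneg hf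
  -- unitization
  have hA'sa : IsSelfAdjoint (a : A⁺¹) := hasa.inr ℂ
  have hB'sa : IsSelfAdjoint (b : A⁺¹) := hbsa.inr ℂ
  have hS'sa : IsSelfAdjoint (s : A⁺¹) := hs_sa.inr ℂ
  have hE : (e : A⁺¹) = cfc m (a : A⁺¹) := by
    rw [hedef, cutdown, hm, Unitization.real_cfcₙ_eq_cfc_inr a _ hm0]
  have hS : (s : A⁺¹) = cfc ms (a : A⁺¹) := by
    rw [hsdef, Unitization.real_cfcₙ_eq_cfc_inr a ms hms0]
  have hF : (f : A⁺¹) = cfc mf (b : A⁺¹) := by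
    rw [hfdef, cutdown, hmf, Unitization.real_cfcₙ_eq_cfc_inr b _ hmf0]
  -- I1 : S a' S as cfc
  have I1 : cfc (fun u => ms u * u * ms u) (a : A⁺¹) = (s : A⁺¹) * (a : A⁺¹) * (s : A⁺¹) := by
    rw [cfc_mul (fun u => ms u * u) ms _ (hmsc.mul continuous_id).continuousOn hmsc.continuousOn]
    rw [cfc_mul ms (fun u => u) _ hmsc.continuousOn continuousOn_id]
    rw [cfc_id' ℝ (a : A⁺¹), ← hS]
  -- I2 : pointwise identity
  have hmsm : ∀ u : ℝ, ms u * ms u = m u := fun u => by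
    rw [hms, hm]; exact Real.mul_self_sqrt (le_max_right _ _)
  have I2 : (fun u : ℝ => ms u * u * ms u)
      = fun u => δ * m u + (m u * m u + (lam + r) * m u) := by
    funext u
    have h2 : ms u * u * ms u = m u * u := by rw [← hmsm u]; ring
    rw [h2]
    rcases le_total u (lam + ε) with hcase | hcase
    · have h3 : m u = 0 := by rw [hm]; simp; linarith
      rw [h3]; ring
    · have h3 : m u = u - (lam + ε) := by rw [hm]; simp; linarith
      rw [h3, hδdef]; ring
  -- I3 : split the cfc
  have I3 : cfc (fun u : ℝ => δ * m u + (m u * m u + (lam + r) * m u)) (a : A⁺¹)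
      = δ • cfc m (a : A⁺¹) + (cfc m (a : A⁺¹) * cfc m (a : A⁺¹)
          + (lam + r) • cfc m (a : A⁺¹)) := by
    rw [cfc_add (a : A⁺¹) (fun u => δ * m u) (fun u => m u * m u + (lam + r) * m u)
      (by fun_prop) (by fun_prop)]
    rw [cfc_add (a : A⁺¹) (fun u => m u * m u) (fun u => (lam + r) * m u)
      (by fun_prop) (by fun_prop)]
    rw [cfc_mul m m (a : A⁺¹) (by fun_prop) (by fun_prop)]
    rw [cfc_const_mul δ m (a : A⁺¹) (by fun_prop)]
    rw [cfc_const_mul (lam + r) m (a : A⁺¹) (by fun_prop)]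
  -- a' ≤ b' + r • 1
  have hab' : (a : A⁺¹) ≤ (b : A⁺¹) + r • (1 : A⁺¹) := by
    have h1 : (a : A⁺¹) - (b : A⁺¹) ≤ algebraMap ℝ A⁺¹ ‖(a : A⁺¹) - (b : A⁺¹)‖ :=
      IsSelfAdjoint.le_algebraMap_norm_self (hA'sa.sub hB'sa)
    have h2 : ‖(a : A⁺¹) - (b : A⁺¹)‖ = r := by
      rw [← Unitization.inr_sub ℂ a b, Unitization.norm_inr]
    rw [h2, Algebra.algebraMap_eq_smul_one] at h1
    calc (a : A⁺¹) ≤ r • 1 + (b : A⁺¹) := sub_le_iff_le_add.mp h1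
      _ = (b : A⁺¹) + r • 1 := add_comm _ _
  -- b' ≤ f' + lam • 1
  have hbf : (b : A⁺¹) ≤ (f : A⁺¹) + lam • (1 : A⁺¹) := by
    rw [hF]
    have h2 : cfc mf (b : A⁺¹) + lam • (1 : A⁺¹) = cfc (fun u => mf u + lam) (b : A⁺¹) := by
      rw [cfc_add (b : A⁺¹) mf (fun _ => lam) (by fun_prop) (by fun_prop),
        cfc_const lam (b : A⁺¹), Algebra.algebraMap_eq_smul_one]
    rw [h2]
    conv_lhs => rw [← cfc_id' ℝ (b : A⁺¹)]
    refine cfc_mono fun u hu => ?_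
    have h3 := le_max_left (u - lam) (0 : ℝ)
    simp only [hmf]
    linarith
  have hSSE : (s : A⁺¹) * (s : A⁺¹) = (e : A⁺¹) := by
    rw [hS, ← cfc_mul ms ms (a : A⁺¹) (by fun_prop) (by fun_prop)]
    rw [show (fun u => ms u * ms u) = m from funext hmsm, ← hE]
  -- the key inequality in the unitization
  have hkeyB : δ • (e : A⁺¹) ≤ (s : A⁺¹) * (f : A⁺¹) * (s : A⁺¹) := by
    have hc1 : (s : A⁺¹) * (a : A⁺¹) * (s : A⁺¹)
        ≤ (s : A⁺¹) * ((f : A⁺¹) + (lam + r) • 1) * (s : A⁺¹) := by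
      refine IsSelfAdjoint.conjugate_le_conjugate ?_ hS'sa
      calc (a : A⁺¹) ≤ (b : A⁺¹) + r • 1 := hab'
        _ ≤ ((f : A⁺¹) + lam • 1) + r • 1 := add_le_add hbf le_rfl
        _ = (f : A⁺¹) + (lam + r) • 1 := by rw [add_smul]; abel
    have hexp : (s : A⁺¹) * ((f : A⁺¹) + (lam + r) • 1) * (s : A⁺¹)
        = (s : A⁺¹) * (f : A⁺¹) * (s : A⁺¹) + (lam + r) • (e : A⁺¹) := by
      rw [mul_add, add_mul, ← hSSE]
      congr 1
      rw [mul_smul_comm, smul_mul_assoc, mul_one]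
    have hlhs : (s : A⁺¹) * (a : A⁺¹) * (s : A⁺¹)
        = δ • (e : A⁺¹) + ((e : A⁺¹) * (e : A⁺¹) + (lam + r) • (e : A⁺¹)) := by
      rw [← I1, I2, I3, hE]
    rw [hlhs, hexp] at hc1
    rw [← add_assoc] at hc1
    have hc2 : δ • (e : A⁺¹) + (e : A⁺¹) * (e : A⁺¹) ≤ (s : A⁺¹) * (f : A⁺¹) * (s : A⁺¹) :=
      le_of_add_le_add_right hc1
    refine le_trans ?_ hc2
    have hee : 0 ≤ (e : A⁺¹) * (e : A⁺¹) := by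
      have h4 := star_mul_self_nonneg (e : A⁺¹)
      rwa [(he_sa.inr ℂ).star_eq] at h4
    exact le_add_of_nonneg_right hee
  have hsfs_sa : IsSelfAdjoint (s * f * s) := by
    rw [isSelfAdjoint_iff]
    simp only [star_mul, hs_sa.star_eq, hf_sa.star_eq, mul_assoc]
  have key : δ • e ≤ s * f * s := by
    have h1 : IsSelfAdjoint (δ • e) := by
      rw [isSelfAdjoint_iff, star_smul, star_trivial, he_sa.star_eq]
    rw [← Unitization.inr_le_iff _ _ h1 hsfs_sa, Unitization.inr_smul,
      Unitization.inr_mul, Unitization.inr_mul]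
    exact hkeyB
  have h0δe : 0 ≤ δ • e := by
    rw [← Unitization.inr_nonneg_iff (A := A), Unitization.inr_smul, hE,
      ← cfc_const_mul δ m (a : A⁺¹) (by fun_prop)]
    exact cfc_nonneg fun u hu => mul_nonneg hδ.le (le_max_right _ _)
  have h1 : CuntzLE e (s * f * s) := cuntzLE_of_smul_le hδ (cuntzLE_of_le h0δe key)
  have h2 : CuntzLE (s * f * s) f := cuntzLE_conj hf hs_sa
  exact cuntzLE_trans h1 h2
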